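/- Let t be an ordered labeled tree and let v be a node of t with children v1, v2, …, vk (in sibling order, k ≥ 1). Then in XML(FCNS(t)) the closing tags of the children of v occupy consecutive positions in reverse sibling order: pos'(v̄i) = pos'(v̄(i+1)) + 1 for every 1 ≤ i ≤ k − 1, so that v̄k v̄(k−1) ⋯ v̄1 is a contiguous substring of XML(FCNS(t)). -/

import Mathlib

/-- Ordered labeled trees (rose trees). -/
inductive RTree (α : Type) : Type
  | node : α → List (RTree α) → RTree α

/-- Extended binary trees: every node has an optional left and right child. -/
inductive BTree (α : Type) : Type
  | nil : BTree α
  | node : α → BTree α → BTree α → BTree α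

namespace BTree

/-- Tag sequence of an extended binary tree: opening tag, left subtree,
right subtree, closing tag.  `false` = opening tag, `true` = closing tag. -/
def btags {α : Type} : BTree α → List (α × Bool)
  | .nil => []
  | .node a l r => (a, false) :: (btags l ++ btags r ++ [(a, true)])

end BTree

namespace RTree

variable {α : Type}

def label : RTree α → α
  | .node a _ => a

def childLabels : RTree α → List α
  | .node _ cs => cs.map label

mutual
/-- Number of nodes of a tree. -/
def size : RTree α → ℕ
  | .node _ cs => 1 + sizeL cs
def sizeL : List (RTree α) → ℕ
  | [] => 0
  | c :: cs => size c + sizeL cs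
end

mutual
/-- `XML(t)`: the tag sequence of a depth-first traversal;
`(a, false)` is an opening tag, `(a, true)` a closing tag. -/
def xml : RTree α → List (α × Bool)
  | .node a cs => (a, false) :: (xmlL cs ++ [(a, true)])
def xmlL : List (RTree α) → List (α × Bool)
  | [] => []
  | c :: cs => xml c ++ xmlL cs
end

mutual
/-- XML tag sequence where each node is identified by its path
(list of child indices from the root). -/
def ptags : RTree α → List ℕ → List (List ℕ × Bool)
  | .node _ cs, p => (p, false) :: (ptagsL cs p 0 ++ [(p, true)])
def ptagsL : List (RTree α) → List ℕ → ℕ → List (List ℕ × Bool)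
  | [], _, _ => []
  | c :: cs, p, i => ptags c (p ++ [i]) ++ ptagsL cs p (i + 1)
end

/-- `XML(t)`, with nodes identified by their paths. -/
def tagList (t : RTree α) : List (List ℕ × Bool) := ptags t []

/-- `pos(v)`: (1-indexed) position of the opening tag of node `v` in `XML(t)`. -/
def posOpen (t : RTree α) (v : List ℕ) : ℕ := (tagList t).idxOf (v, false) + 1

/-- `pos(v̄)`: (1-indexed) position of the closing tag of node `v` in `XML(t)`. -/
def posClose (t : RTree α) (v : List ℕ) : ℕ := (tagList t).idxOf (v, true) + 1

/-- Subtree of `t` rooted at the node with path `p` (if any). -/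
def subtreeAt : RTree α → List ℕ → Option (RTree α)
  | t, [] => some t
  | .node _ cs, i :: p =>
    match cs[i]? with
    | some c => subtreeAt c p
    | none => none

/-- `p` is (the path of) a node of `t`. -/
def IsNode (t : RTree α) (p : List ℕ) : Prop := (subtreeAt t p).isSome

/-- First-child next-sibling encoding of a forest. -/
def fcnsL : List (RTree α) → BTree α
  | [] => .nil
  | .node a cs :: ts => .node a (fcnsL cs) (fcnsL ts)

/-- First-child next-sibling encoding `FCNS(t)`. -/
def fcns (t : RTree α) : BTree α := fcnsL [t]

/-- FCNS encoding of a forest, nodes identified by their paths in the original tree;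
`p` is the path of the parent, `i` the index of the first tree of the forest. -/
def pfcnsL : List (RTree α) → List ℕ → ℕ → BTree (List ℕ)
  | [], _, _ => .nil
  | .node _ cs :: ts, p, i =>
      .node (p ++ [i]) (pfcnsL cs (p ++ [i]) 0) (pfcnsL ts p (i + 1))

/-- `FCNS(t)`, with nodes identified by their paths in `t`. -/
def pfcns : RTree α → BTree (List ℕ)
  | .node _ cs => .node [] (pfcnsL cs [] 0) .nil

/-- `XML(FCNS(t))`, with nodes identified by their paths in `t`. -/
def btagList (t : RTree α) : List (List ℕ × Bool) := (pfcns t).btags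

/-- `pos'(v)`: position of the opening tag of `v` in `XML(FCNS(t))`. -/
def posOpen' (t : RTree α) (v : List ℕ) : ℕ := (btagList t).idxOf (v, false) + 1

/-- `pos'(v̄)`: position of the closing tag of `v` in `XML(FCNS(t))`. -/
def posClose' (t : RTree α) (v : List ℕ) : ℕ := (btagList t).idxOf (v, true) + 1

/-- A tree is valid against a DTD `D` if for every node, the word of labels of
its children belongs to `D` applied to the node's label. -/
def Valid (D : α → List α → Prop) (t : RTree α) : Prop :=
  ∀ p st, subtreeAt t p = some st → D st.label st.childLabels

end RTree

namespace RTree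

variable {α : Type}

def kids : RTree α → List (RTree α)
  | .node _ cs => cs

/-- Every tag in the FCNS encoding of a forest with parent path `q` and start
index `j` has a path of the form `q ++ m :: rest` with `j ≤ m`. -/
theorem shape : ∀ (ts : List (RTree α)) (q : List ℕ) (j : ℕ)
    (x : List ℕ × Bool), x ∈ (pfcnsL ts q j).btags →
    ∃ m rest, x.1 = q ++ m :: rest ∧ j ≤ m
  | [], q, j, x, hx => by simp [pfcnsL, BTree.btags] at hx
  | .node a cs :: ts, q, j, x, hx => by
      simp only [pfcnsL, BTree.btags, List.mem_cons, List.mem_append,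
        List.mem_singleton] at hx
      rcases hx with h | (h | h) | h
      · exact ⟨j, [], by simp [h], le_refl j⟩
      · obtain ⟨m, rest, h1, _⟩ := shape cs (q ++ [j]) 0 x h
        exact ⟨j, m :: rest, by simp [h1], le_refl j⟩
      · obtain ⟨m, rest, h1, h2⟩ := shape ts q (j + 1) x h
        exact ⟨m, rest, h1, by omega⟩
      · exact ⟨j, [], by simp at h; simp [h], le_refl j⟩
  termination_by ts => sizeL ts
  decreasing_by
    all_goals (simp [sizeL, size]; try omega)

theorem btags_nodup : ∀ (ts : List (RTree α)) (q : List ℕ) (j : ℕ),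
    ((pfcnsL ts q j).btags).Nodup
  | [], q, j => by simp [pfcnsL, BTree.btags]
  | .node a cs :: ts, q, j => by
      have hL := btags_nodup cs (q ++ [j]) 0
      have hR := btags_nodup ts q (j + 1)
      simp only [pfcnsL, BTree.btags]
      have hLp : ∀ x ∈ (pfcnsL cs (q ++ [j]) 0).btags,
          ∃ m rest, x.1 = q ++ j :: m :: rest := by
        intro x hx
        obtain ⟨m, rest, h1, _⟩ := shape cs (q ++ [j]) 0 x hx
        exact ⟨m, rest, by simp [h1]⟩
      have hRp : ∀ x ∈ (pfcnsL ts q (j + 1)).btags,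
          ∃ m rest, x.1 = q ++ m :: rest ∧ j + 1 ≤ m :=
        shape ts q (j + 1)
      refine List.nodup_cons.2 ⟨?_, ?_⟩
      · intro hmem
        simp only [List.mem_append, List.mem_singleton] at hmem
        rcases hmem with (h | h) | h
        · obtain ⟨m, rest, h1⟩ := hLp _ h
          have := congrArg List.length h1; simp at this
        · obtain ⟨m, rest, h1, h2⟩ := hRp _ h
          simp only at h1
          have : ([j] : List ℕ) = m :: rest := List.append_cancel_left h1
          have : j = m := by injection this
          omega
        · simp at h
      · rw [List.nodup_append]
        refine ⟨List.nodup_append.2 ⟨hL, hR, ?_⟩, List.nodup_singleton _, ?_⟩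
        · intro x hx y hx' hxy
          subst hxy
          obtain ⟨m, rest, h1⟩ := hLp _ hx
          obtain ⟨m', rest', h1', _⟩ := hRp _ hx'
          rw [h1] at h1'
          have : (j :: m :: rest : List ℕ) = m' :: rest' :=
            List.append_cancel_left h1'
          have : j = m' := by injection this
          omega
        · intro x hx y hx' hxy
          subst hxy
          simp only [List.mem_singleton] at hx'
          simp only [List.mem_append] at hx
          subst hx'
          rcases hx with h | h
          · obtain ⟨m, rest, h1⟩ := hLp _ h
            simp only at h1
            have : ([j] : List ℕ) = j :: m :: rest :=
              List.append_cancel_left h1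
            simp at this
          · obtain ⟨m, rest, h1, h2⟩ := hRp _ h
            simp only at h1
            have : ([j] : List ℕ) = m :: rest := List.append_cancel_left h1
            have : j = m := by injection this
            omega
  termination_by ts => sizeL ts
  decreasing_by
    all_goals (simp [sizeL, size]; try omega)

theorem lastTag : ∀ (ts : List (RTree α)) (q : List ℕ) (j : ℕ), ts ≠ [] →
    ∃ A, (pfcnsL ts q j).btags = A ++ [(q ++ [j], true)]
  | [], _, _, h => absurd rfl h
  | .node a cs :: ts, q, j, _ =>
      ⟨(q ++ [j], false) :: ((pfcnsL cs (q ++ [j]) 0).btags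
        ++ (pfcnsL ts q (j + 1)).btags), by simp [pfcnsL, BTree.btags]⟩

theorem close_adj : ∀ (ts : List (RTree α)) (q : List ℕ) (j i : ℕ),
    i + 1 < ts.length →
    ∃ A B, (pfcnsL ts q j).btags =
      A ++ (q ++ [j + i + 1], true) :: (q ++ [j + i], true) :: B
  | [], _, _, _, h => by simp at h
  | .node a cs :: ts, q, j, 0, h => by
      have hne : ts ≠ [] := by
        simp only [List.length_cons] at h
        intro he; rw [he] at h; simp at h
      obtain ⟨A', hA'⟩ := lastTag ts q (j + 1) hne
      refine ⟨(q ++ [j], false) :: ((pfcnsL cs (q ++ [j]) 0).btags ++ A'), [], ?_⟩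
      simp [pfcnsL, BTree.btags, hA']
  | .node a cs :: ts, q, j, i + 1, h => by
      have hlen : i + 1 < ts.length := by
        simp only [List.length_cons] at h; omega
      obtain ⟨A, B, hAB⟩ := close_adj ts q (j + 1) i hlen
      refine ⟨(q ++ [j], false) :: ((pfcnsL cs (q ++ [j]) 0).btags ++ A),
        B ++ [(q ++ [j], true)], ?_⟩
      have e1 : j + (i + 1) + 1 = j + 1 + i + 1 := by omega
      have e2 : j + (i + 1) = j + 1 + i := by omega
      rw [e1, e2]
      simp [pfcnsL, BTree.btags, hAB]

theorem forest_get : ∀ (ts : List (RTree α)) (q : List ℕ) (j idx : ℕ)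
    (c : RTree α), ts[idx]? = some c →
    ∃ C D, (pfcnsL ts q j).btags
      = C ++ (pfcnsL (kids c) (q ++ [j + idx]) 0).btags ++ D
  | [], _, _, _, _, h => by simp at h
  | .node a cs :: ts, q, j, 0, c, h => by
      simp only [List.getElem?_cons_zero, Option.some.injEq] at h
      refine ⟨[(q ++ [j], false)],
        (pfcnsL ts q (j + 1)).btags ++ [(q ++ [j], true)], ?_⟩
      rw [← h]
      simp [pfcnsL, BTree.btags, kids]
  | .node a cs :: ts, q, j, idx + 1, c, h => by
      simp only [List.getElem?_cons_succ] at h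
      obtain ⟨C, D, hCD⟩ := forest_get ts q (j + 1) idx c h
      refine ⟨(q ++ [j], false) :: ((pfcnsL cs (q ++ [j]) 0).btags ++ C),
        D ++ [(q ++ [j], true)], ?_⟩
      have e : j + (idx + 1) = j + 1 + idx := by omega
      rw [e]
      simp [pfcnsL, BTree.btags, hCD]

theorem tree_sub : ∀ (p' : List ℕ) (st : RTree α) (a' : α)
    (cs' : List (RTree α)), subtreeAt st p' = some (.node a' cs') →
    ∀ r : List ℕ, ∃ C D, (pfcnsL (kids st) r 0).btags
      = C ++ (pfcnsL cs' (r ++ p') 0).btags ++ D := by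
  intro p'
  induction p' with
  | nil =>
      intro st a' cs' h r
      simp only [subtreeAt, Option.some.injEq] at h
      subst h
      exact ⟨[], [], by simp [kids]⟩
  | cons idx p' ih =>
      intro st a' cs' h r
      cases st with
      | node a cs =>
        simp only [subtreeAt] at h
        cases hg : cs[idx]? with
        | none => rw [hg] at h; simp at h
        | some c =>
          rw [hg] at h
          obtain ⟨C1, D1, h1⟩ := forest_get cs r 0 idx c hg
          obtain ⟨C2, D2, h2⟩ := ih c a' cs' h (r ++ [idx])
          rw [Nat.zero_add] at h1
          refine ⟨C1 ++ C2, D2 ++ D1, ?_⟩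
          simp only [kids]
          rw [h1, h2]
          simp

theorem indexOf_append_cons {β : Type} [BEq β] [LawfulBEq β] :
    ∀ (E : List β) (F : List β) (x : β), x ∉ E →
      (E ++ x :: F).idxOf x = E.length
  | [], F, x, _ => by simp [List.idxOf_cons]
  | e :: E, F, x, hx => by
      have hne : (e == x) = false := by
        rw [beq_eq_false_iff_ne]
        intro he; exact hx (he ▸ (List.mem_cons_self : e ∈ e :: E))
      have ih := indexOf_append_cons E F x (fun hm => hx (List.mem_cons_of_mem e hm))
      simp [List.idxOf_cons, hne, ih]

theorem indexOf_eq_of_nodup {β : Type} [BEq β] [LawfulBEq β] {l E F : List β}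
    {x : β} (hn : l.Nodup) (he : l = E ++ x :: F) : l.idxOf x = E.length := by
  subst he
  exact indexOf_append_cons E F x (fun hxE =>
    (List.disjoint_of_nodup_append hn) hxE (List.mem_cons_self : x ∈ x :: F))
end RTree

/-- `w` is a later sibling of `v` (as paths): same parent, larger last index. -/
def LaterSib (w v : List ℕ) : Prop := ∃ q i j, v = q ++ [i] ∧ w = q ++ [j] ∧ i < j

/-- Let `v` be a node of `t` with children `v₁, …, v_k` (`k ≥ 1`,
children of the node at path `p` have paths `p ++ [0], …, p ++ [k-1]`).  Then in
`XML(FCNS(t))` the closing tags of the children occupy consecutive positions in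
reverse sibling order: `pos'(v̄ᵢ) = pos'(v̄ᵢ₊₁) + 1` for `1 ≤ i ≤ k − 1`
(0-indexed: for all `i` with `i + 1 < k`), so that `v̄ₖ v̄ₖ₋₁ ⋯ v̄₁` is a
contiguous substring of `XML(FCNS(t))`. -/
theorem children_closing_consecutive {α : Type} (t : RTree α) (p : List ℕ)
    (a : α) (cs : List (RTree α)) (h : RTree.subtreeAt t p = some (.node a cs))
    (hk : 1 ≤ cs.length) :
    ∀ i : ℕ, i + 1 < cs.length →
      RTree.posClose' t (p ++ [i]) = RTree.posClose' t (p ++ [i + 1]) + 1 := by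
  intro i hi
  obtain ⟨C, D, hCD⟩ := RTree.tree_sub p t a cs h []
  obtain ⟨A, B, hAB⟩ := RTree.close_adj cs p 0 i hi
  rw [Nat.zero_add] at hAB
  cases t with
  | node a0 cs0 =>
    have hbt : RTree.btagList (RTree.node a0 cs0)
        = ([], false) :: ((RTree.pfcnsL cs0 [] 0).btags ++ [(([] : List ℕ), true)]) := by
      simp [RTree.btagList, RTree.pfcns, BTree.btags]
    simp only [RTree.kids, List.nil_append] at hCD
    rw [hAB] at hCD
    set c2 : List ℕ × Bool := (p ++ [i + 1], true) with hc2
    set c1 : List ℕ × Bool := (p ++ [i], true) with hc1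
    have he2 : RTree.btagList (RTree.node a0 cs0)
        = ((([] : List ℕ), false) :: (C ++ A)) ++ c2
          :: (c1 :: (B ++ D ++ [(([] : List ℕ), true)])) := by
      rw [hbt, hCD]; simp
    have he1 : RTree.btagList (RTree.node a0 cs0)
        = (((([] : List ℕ), false) :: (C ++ A)) ++ [c2]) ++ c1
          :: (B ++ D ++ [(([] : List ℕ), true)]) := by
      rw [hbt, hCD]; simp
    have hM := RTree.btags_nodup cs0 ([] : List ℕ) 0
    have hshape := RTree.shape cs0 ([] : List ℕ) 0
    have hnd : (RTree.btagList (RTree.node a0 cs0)).Nodup := by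
      rw [hbt]
      refine List.nodup_cons.2 ⟨?_, ?_⟩
      · intro hmem
        simp only [List.mem_append, List.mem_singleton, List.mem_cons,
          List.not_mem_nil, or_false] at hmem
        rcases hmem with h' | h'
        · obtain ⟨m, rest, h1, _⟩ := hshape _ h'
          simp at h1
        · simp at h'
      · rw [List.nodup_append]
        refine ⟨hM, List.nodup_singleton _, ?_⟩
        intro x hx y hx' hxy
        subst hxy
        simp only [List.mem_singleton, List.mem_cons, List.not_mem_nil,
          or_false] at hx'
        obtain ⟨m, rest, h1, _⟩ := hshape _ hx
        rw [hx'] at h1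
        simp at h1
    have h2 := RTree.indexOf_eq_of_nodup hnd he2
    have h1 := RTree.indexOf_eq_of_nodup hnd he1
    simp only [List.length_append, List.length_cons, List.length_singleton, List.length_nil] at h1 h2
    simp only [RTree.posClose', ← hc1, ← hc2, h1, h2]
    try omega
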